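/- Let u : ℝ × ℝ² → ℝ² be a C¹ time-dependent vector field, and let Q : ℝ × ℝ → ℝ² (arguments time t and curve parameter s) be C², and P : ℝ × ℝ → ℝ² be differentiable in t, satisfying ∂Q/∂t (t,s) = u(t, Q(t,s)) and ∂P/∂t (t,s) = −(D_x u(t, Q(t,s)))ᵀ P(t,s), where D_x u denotes the spatial derivative of u. Then for each fixed s, the scalar t ↦ P(t,s) · ∂Q/∂s (t,s) is constant in time; i.e. the momentum conjugate to the particle-relabelling symmetry, P · ∂Q/∂s, is conserved along solutions. -/

import Mathlib

open scoped RealInnerProductSpace BigOperators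

/-- For a curve `Q(t,s)` embedded in the flow of a `C¹` time-dependent vector
field `u` (so `∂Q/∂t = u(t, Q)`), with momentum satisfying the adjoint equation
`∂P/∂t = −(D_x u(t, Q))ᵀ P`, the momentum conjugate to the particle-relabelling symmetry,
`P · ∂Q/∂s`, is conserved: for each fixed `s`, `t ↦ P(t,s) · ∂Q/∂s(t,s)` is constant. -/
theorem relabelling_momentum_conserved
    (u : ℝ × EuclideanSpace ℝ (Fin 2) → EuclideanSpace ℝ (Fin 2))
    (hu : ContDiff ℝ 1 u)
    (Q : ℝ × ℝ → EuclideanSpace ℝ (Fin 2))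
    (hQsmooth : ContDiff ℝ 2 Q)
    (P : ℝ × ℝ → EuclideanSpace ℝ (Fin 2))
    (hQ : ∀ (t s : ℝ),
      HasDerivAt (fun τ => Q (τ, s)) (u (t, Q (t, s))) t)
    (hP : ∀ (t s : ℝ),
      HasDerivAt (fun τ => P (τ, s))
        (-(ContinuousLinearMap.adjoint
            (fderiv ℝ (fun x => u (t, x)) (Q (t, s)))) (P (t, s))) t) :
    ∀ (s t₁ t₂ : ℝ),
      ⟪P (t₁, s), deriv (fun σ => Q (t₁, σ)) s⟫
        = ⟪P (t₂, s), deriv (fun σ => Q (t₂, σ)) s⟫ := by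
  intro s t₁ t₂
  have hQd : Differentiable ℝ Q := hQsmooth.differentiable (by norm_num)
  have hQ1 : ContDiff ℝ 1 (fderiv ℝ Q) := hQsmooth.fderiv_right (by norm_num)
  -- W t = ∂Q/∂s (t, s)
  set W : ℝ → EuclideanSpace ℝ (Fin 2) := fun t => fderiv ℝ Q (t, s) ((0 : ℝ), (1 : ℝ))
    with hWdef
  -- the s-derivative of Q(t, ·) at any point
  have hds : ∀ (t σ : ℝ),
      HasDerivAt (fun σ' => Q (t, σ')) (fderiv ℝ Q (t, σ) ((0 : ℝ), (1 : ℝ))) σ := by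
    intro t σ
    have h := (hQd (t, σ)).hasFDerivAt.comp_hasDerivAt σ
      ((hasDerivAt_const σ t).prodMk (hasDerivAt_id σ))
    exact h
  -- the t-derivative of Q(·, σ) expressed via fderiv
  have hdt : ∀ (t σ : ℝ), fderiv ℝ Q (t, σ) ((1 : ℝ), (0 : ℝ)) = u (t, Q (t, σ)) := by
    intro t σ
    have h := (hQd (t, σ)).hasFDerivAt.comp_hasDerivAt t
      ((hasDerivAt_id t).prodMk (hasDerivAt_const t σ))
    have h' : HasDerivAt (fun τ => Q (τ, σ)) (fderiv ℝ Q (t, σ) ((1 : ℝ), (0 : ℝ))) t := by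
      exact h
    exact h'.unique (hQ t σ)
  -- W satisfies W' = (D_x u) W
  have hWd : ∀ t, HasDerivAt W
      ((fderiv ℝ (fun x => u (t, x)) (Q (t, s))) (W t)) t := by
    intro t
    set f2 := fderiv ℝ (fderiv ℝ Q) (t, s) with hf2def
    have hf2 : HasFDerivAt (fderiv ℝ Q) f2 (t, s) :=
      (hQ1.differentiable (by norm_num) (t, s)).hasFDerivAt
    -- derivative of t ↦ fderiv Q (t,s) applied to (0,1)
    have h1 : HasDerivAt (fun τ => fderiv ℝ Q (τ, s)) (f2 ((1 : ℝ), (0 : ℝ))) t := by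
      have h := hf2.comp_hasDerivAt t ((hasDerivAt_id t).prodMk (hasDerivAt_const t s))
      exact h
    have hW1 : HasDerivAt W (f2 ((1 : ℝ), (0 : ℝ)) ((0 : ℝ), (1 : ℝ))) t := by
      have h := h1.clm_apply (hasDerivAt_const t (((0 : ℝ), (1 : ℝ)) : ℝ × ℝ))
      simpa using h
    -- symmetry of second derivative
    have hsym : IsSymmSndFDerivAt ℝ Q (t, s) :=
      (hQsmooth.contDiffAt).isSymmSndFDerivAt (by simp [minSmoothness_of_isRCLikeNormedField])
    -- identify f2 (0,1) (1,0) via the chain rule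
    have h2 : HasDerivAt (fun σ => fderiv ℝ Q (t, σ) ((1 : ℝ), (0 : ℝ)))
        (f2 ((0 : ℝ), (1 : ℝ)) ((1 : ℝ), (0 : ℝ))) s := by
      have h := hf2.comp_hasDerivAt s ((hasDerivAt_const s t).prodMk (hasDerivAt_id s))
      have h' : HasDerivAt (fun σ => fderiv ℝ Q (t, σ)) (f2 ((0 : ℝ), (1 : ℝ))) s := by
        exact h
      have h'' := h'.clm_apply (hasDerivAt_const s (((1 : ℝ), (0 : ℝ)) : ℝ × ℝ))
      simpa using h''
    have h3 : HasDerivAt (fun σ => u (t, Q (t, σ)))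
        (f2 ((0 : ℝ), (1 : ℝ)) ((1 : ℝ), (0 : ℝ))) s := by
      have : (fun σ => fderiv ℝ Q (t, σ) ((1 : ℝ), (0 : ℝ)))
          = fun σ => u (t, Q (t, σ)) := funext fun σ => hdt t σ
      rwa [this] at h2
    -- chain rule for σ ↦ u(t, Q(t,σ))
    have hv : ContDiff ℝ 1 (fun x => u (t, x)) :=
      hu.comp (contDiff_const.prodMk contDiff_id)
    have hvA : HasFDerivAt (fun x => u (t, x))
        (fderiv ℝ (fun x => u (t, x)) (Q (t, s))) (Q (t, s)) :=
      (hv.differentiable (by norm_num) (Q (t, s))).hasFDerivAt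
    have h4 : HasDerivAt (fun σ => u (t, Q (t, σ)))
        ((fderiv ℝ (fun x => u (t, x)) (Q (t, s))) (W t)) s := by
      have h := hvA.comp_hasDerivAt s (hds t s)
      exact h
    have heq : f2 ((0 : ℝ), (1 : ℝ)) ((1 : ℝ), (0 : ℝ))
        = (fderiv ℝ (fun x => u (t, x)) (Q (t, s))) (W t) := h3.unique h4
    have hsymeq : f2 ((1 : ℝ), (0 : ℝ)) ((0 : ℝ), (1 : ℝ))
        = f2 ((0 : ℝ), (1 : ℝ)) ((1 : ℝ), (0 : ℝ)) := hsym _ _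
    rw [hsymeq, heq] at hW1
    exact hW1
  -- the conserved quantity
  set f : ℝ → ℝ := fun t => ⟪P (t, s), W t⟫ with hfdef
  have hf : ∀ t, HasDerivAt f 0 t := by
    intro t
    set A := fderiv ℝ (fun x => u (t, x)) (Q (t, s)) with hA
    have h := (hP t s).inner ℝ (hWd t)
    have hval : ⟪P (t, s), A (W t)⟫ + ⟪-(ContinuousLinearMap.adjoint A) (P (t, s)), W t⟫
        = 0 := by
      rw [inner_neg_left, ContinuousLinearMap.adjoint_inner_left]
      ring
    rw [hval] at h
    exact h
  have hconst : f t₁ = f t₂ :=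
    is_const_of_deriv_eq_zero (fun t => (hf t).differentiableAt)
      (fun t => (hf t).deriv) t₁ t₂
  have hderivQ : ∀ t, deriv (fun σ => Q (t, σ)) s = W t := fun t => (hds t s).deriv
  rw [hderivQ t₁, hderivQ t₂]
  exact hconst
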